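/- Let μ be a doubling measure on ℝⁿ with doubling constant C (μ(2B) ≤ Cμ(B) for all balls B). Then for any distinct x, y ∈ ℝⁿ and r > 0, choosing w with x−w ⊥ x−y and |x−w| = r/2, every z in the closed ball B(w, r/4) satisfies τ(x,y,z) := π − max{∠zxy, ∠zyx} ≥ π/3, and μ(B(x,r)) ≤ C³μ(B(w, r/4)). -/

import Mathlib

open MeasureTheory Metric EuclideanGeometry

set_option maxHeartbeats 1600000 in
theorem stmt19 (n : ℕ) (hn : 2 ≤ n) (μ : Measure (EuclideanSpace ℝ (Fin n)))
    (C : ℝ) (hC : 1 ≤ C)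
    (hdbl : ∀ (c : EuclideanSpace ℝ (Fin n)) (ρ : ℝ), 0 < ρ →
      μ (closedBall c (2 * ρ)) ≤ ENNReal.ofReal C * μ (closedBall c ρ))
    (x y : EuclideanSpace ℝ (Fin n)) (hxy : x ≠ y) (r : ℝ) (hr : 0 < r)
    (w : EuclideanSpace ℝ (Fin n))
    (hw_orth : (inner ℝ (x - w) (x - y) : ℝ) = 0) (hw_dist : ‖x - w‖ = r / 2) :
    (∀ z ∈ closedBall w (r / 4),
      Real.pi / 3 ≤ Real.pi - max (∠ z x y) (∠ z y x)) ∧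
    μ (closedBall x r) ≤ ENNReal.ofReal C ^ 3 * μ (closedBall w (r / 4)) := by
  constructor
  · intro z hz
    set e : EuclideanSpace ℝ (Fin n) := y - x with he
    set u : EuclideanSpace ℝ (Fin n) := w - x with hu
    set v : EuclideanSpace ℝ (Fin n) := z - w with hv
    have hue : (inner ℝ u e : ℝ) = 0 := by
      rw [hu, he, show w - x = -(x - w) by abel, show y - x = -(x - y) by abel,
        inner_neg_neg]
      exact hw_orth
    have hnu : ‖u‖ = r / 2 := by
      rw [hu, show w - x = -(x - w) by abel, norm_neg]; exact hw_dist
    have hnv : ‖v‖ ≤ r / 4 := by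
      rw [hv, ← dist_eq_norm]; exact mem_closedBall.mp hz
    have hene : e ≠ 0 := sub_ne_zero.mpr (Ne.symm hxy)
    have hne : 0 < ‖e‖ := norm_pos_iff.mpr hene
    have hzx : z - x = u + v := by rw [hu, hv]; abel
    set p : EuclideanSpace ℝ (Fin n) := ((inner ℝ v e : ℝ) / ‖e‖ ^ 2) • e with hp
    set q : EuclideanSpace ℝ (Fin n) := v - p with hq
    have hqe : (inner ℝ q e : ℝ) = 0 := by
      rw [hq, hp, inner_sub_left, real_inner_smul_left, real_inner_self_eq_norm_sq]
      field_simp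
      simp
    have hpq : (inner ℝ p q : ℝ) = 0 := by
      rw [hp, real_inner_smul_left, real_inner_comm q e, hqe, mul_zero]
    have hup : (inner ℝ u p : ℝ) = 0 := by
      rw [hp, real_inner_smul_right, hue, mul_zero]
    have hnp : ‖p‖ = |(inner ℝ v e : ℝ)| / ‖e‖ := by
      rw [hp, norm_smul, Real.norm_eq_abs, abs_div, abs_pow, abs_norm, pow_two]
      field_simp
    have hvpq : v = p + q := by rw [hq]; abel
    have hnv2 : ‖v‖ ^ 2 = ‖p‖ ^ 2 + ‖q‖ ^ 2 := by
      rw [hvpq, ← real_inner_self_eq_norm_sq, real_inner_add_add_self, hpq,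
        real_inner_self_eq_norm_sq, real_inner_self_eq_norm_sq]; ring
    have huq : ‖u‖ - ‖q‖ ≤ ‖u + q‖ := by
      have h := norm_add_le (u + q) (-q)
      rw [norm_neg] at h
      have h2 : ‖u‖ = ‖u + q + -q‖ := by congr 1; abel
      linarith [h2 ▸ h]
    have hnzx2 : ‖z - x‖ ^ 2 = ‖u + q‖ ^ 2 + ‖p‖ ^ 2 := by
      have h1 : (inner ℝ (u + q) p : ℝ) = 0 := by
        rw [inner_add_left, hup, real_inner_comm p q, hpq]; ring
      rw [hzx, hvpq, show u + (p + q) = u + q + p by abel,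
        ← real_inner_self_eq_norm_sq, real_inner_add_add_self, h1,
        real_inner_self_eq_norm_sq, real_inner_self_eq_norm_sq]; ring
    clear_value e u v p q
    have hq0 : 0 ≤ ‖q‖ := norm_nonneg _
    have hqr : ‖q‖ ≤ r / 4 := by nlinarith [norm_nonneg p, norm_nonneg v]
    have key : 4 * ‖p‖ ^ 2 ≤ ‖z - x‖ ^ 2 := by
      have h2 : (r / 2 - ‖q‖) ^ 2 ≤ ‖u + q‖ ^ 2 := by
        have h3 : r / 2 - ‖q‖ ≤ ‖u + q‖ := by rw [← hnu]; linarith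
        nlinarith [norm_nonneg (u + q)]
      nlinarith [sq_nonneg (r / 4 - 2 * ‖q‖), norm_nonneg p, norm_nonneg v, sq_nonneg ‖v‖]
    have hinner : (inner ℝ (z - x) e : ℝ) = inner ℝ v e := by
      rw [hzx, inner_add_left, hue, zero_add]
    have hnzx : r / 4 ≤ ‖z - x‖ := by
      have h3 : ‖u‖ ≤ ‖z - x‖ + ‖v‖ := by
        have h4 : ‖u‖ = ‖(z - x) + (-v)‖ := by congr 1; rw [hzx]; abel
        rw [h4]
        calc ‖z - x + -v‖ ≤ ‖z - x‖ + ‖-v‖ := norm_add_le _ _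
          _ = ‖z - x‖ + ‖v‖ := by rw [norm_neg]
      linarith [hnu ▸ h3]
    have hzxpos : 0 < ‖z - x‖ := by linarith
    have habs : |(inner ℝ (z - x) e : ℝ)| ≤ 1 / 2 * (‖z - x‖ * ‖e‖) := by
      have h4 : |(inner ℝ v e : ℝ)| = ‖p‖ * ‖e‖ := by
        rw [hnp, div_mul_cancel₀ _ hne.ne']
      rw [hinner, h4]
      have h5 : 2 * ‖p‖ ≤ ‖z - x‖ := by
        nlinarith [norm_nonneg p, hzxpos, sq_nonneg (‖z - x‖ - 2 * ‖p‖)]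
      nlinarith [hne, norm_nonneg p]
    have hcos : Real.cos (∠ z x y) = (inner ℝ (z - x) e : ℝ) / (‖z - x‖ * ‖e‖) := by
      rw [EuclideanGeometry.angle, InnerProductGeometry.cos_angle, he]
      simp [vsub_eq_sub]
    have hden : 0 < ‖z - x‖ * ‖e‖ := by positivity
    have hcosle : Real.cos (∠ z x y) ≤ 1 / 2 := by
      rw [hcos, div_le_iff₀ hden]
      have := (abs_le.mp habs).2
      linarith
    have hcosge : -(1 / 2) ≤ Real.cos (∠ z x y) := by
      rw [hcos, le_div_iff₀ hden]
      have := (abs_le.mp habs).1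
      linarith
    have hpi := Real.pi_pos
    have hub : ∠ z x y ≤ 2 * Real.pi / 3 := by
      by_contra h
      push_neg at h
      have hc := Real.cos_lt_cos_of_nonneg_of_le_pi (by positivity)
        (EuclideanGeometry.angle_le_pi z x y) h
      have hval : Real.cos (2 * Real.pi / 3) = -(1 / 2) := by
        rw [show 2 * Real.pi / 3 = Real.pi - Real.pi / 3 by ring, Real.cos_pi_sub,
          Real.cos_pi_div_three]
      linarith
    have hlb : Real.pi / 3 ≤ ∠ z x y := by
      by_contra h
      push_neg at h
      have hc := Real.cos_lt_cos_of_nonneg_of_le_pi (EuclideanGeometry.angle_nonneg z x y)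
        (by linarith) h
      rw [Real.cos_pi_div_three] at hc
      linarith
    have hzy : z ≠ y := by
      rintro rfl
      have h0 : ∠ z x z = 0 := by
        rw [EuclideanGeometry.angle]
        exact InnerProductGeometry.angle_self
          (by rw [vsub_eq_sub]; exact fun hh => hzxpos.ne' (by rw [hh, norm_zero]))
      rw [h0] at hlb
      linarith
    have hzxne : x ≠ z := fun h => hzxpos.ne' (by rw [h, sub_self, norm_zero])
    have hsum := EuclideanGeometry.angle_add_angle_add_angle_eq_pi (p₁ := z) y hzxne
    have hyzx := EuclideanGeometry.angle_nonneg y z x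
    have hcomm : ∠ x y z = ∠ z y x := EuclideanGeometry.angle_comm x y z
    have hub2 : ∠ z y x ≤ 2 * Real.pi / 3 := by rw [← hcomm]; linarith
    rw [le_sub_iff_add_le]
    rcases max_cases (∠ z x y) (∠ z y x) with ⟨h, _⟩ | ⟨h, _⟩ <;> rw [h] <;> linarith
  · have hsub : closedBall x r ⊆ closedBall w (2 * r) := by
      intro z hz
      rw [mem_closedBall] at hz ⊢
      have hd : dist x w = r / 2 := by rw [dist_eq_norm]; exact hw_dist
      calc dist z w ≤ dist z x + dist x w := dist_triangle z x w
        _ ≤ r + r / 2 := by linarith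
        _ ≤ 2 * r := by linarith
    set K := ENNReal.ofReal C with hK
    have h1 : μ (closedBall w (2 * r)) ≤ K * μ (closedBall w r) := hdbl w r hr
    have h2 : μ (closedBall w r) ≤ K * μ (closedBall w (r / 2)) := by
      have := hdbl w (r / 2) (by linarith)
      rwa [show 2 * (r / 2) = r by ring] at this
    have h3 : μ (closedBall w (r / 2)) ≤ K * μ (closedBall w (r / 4)) := by
      have := hdbl w (r / 4) (by linarith)
      rwa [show 2 * (r / 4) = r / 2 by ring] at this
    calc μ (closedBall x r) ≤ μ (closedBall w (2 * r)) := measure_mono hsub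
      _ ≤ K * μ (closedBall w r) := h1
      _ ≤ K * (K * μ (closedBall w (r / 2))) := mul_le_mul_right h2 K
      _ ≤ K * (K * (K * μ (closedBall w (r / 4)))) := mul_le_mul_right (mul_le_mul_right h3 K) K
      _ = K ^ 3 * μ (closedBall w (r / 4)) := by ring
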